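/- Let G be a locally compact Hausdorff topological group and H a closed subgroup. Then B_ℝ(G) ∩ C_ℂ(H\G/H) = B_ℝ(H\G/H); that is, a continuous function f : G → ℂ that is invariant on double cosets (f(hgh') = f(g) for all g ∈ G, h,h' ∈ H) admits a continuous positive decomposition f = f₊ − f₋ into continuous positive definite functions on G if and only if it admits a continuous positive decomposition in which f₊ and f₋ are themselves invariant on double cosets. -/

import Mathlib

open scoped ComplexOrder
open Finset

/-- A function on a group is positive definite if all the matrices
`(f(gᵢ⁻¹gⱼ))ᵢⱼ` are positive semidefinite. -/
def IsPDFun {G : Type} [Group G] (f : G → ℂ) : Prop :=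
  ∀ (N : ℕ) (g : Fin N → G) (c : Fin N → ℂ),
    0 ≤ ∑ i, ∑ j, (starRingEnd ℂ) (c i) * c j * f ((g i)⁻¹ * g j)

/-- A function on `G` is invariant on double cosets of `H` if
`f(hgh') = f(g)` for all `h, h' ∈ H`. -/
def IsDosetInvariant {G : Type} [Group G] (H : Subgroup G) (f : G → ℂ) : Prop :=
  ∀ (g : G), ∀ h ∈ H, ∀ h' ∈ H, f (h * g * h') = f g

noncomputable section PDAux



variable {G : Type} [Group G]




variable {G : Type} [Group G]

/-- The sesquilinear form associated to a kernel `φ`. -/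
def Bf (φ : G → ℂ) (c d : G →₀ ℂ) : ℂ :=
  ∑ x ∈ c.support, ∑ y ∈ d.support, (starRingEnd ℂ) (c x) * d y * φ (x⁻¹ * y)

lemma Bf_eq_sum (φ : G → ℂ) (c d : G →₀ ℂ) {s t : Finset G}
    (hs : c.support ⊆ s) (ht : d.support ⊆ t) :
    Bf φ c d = ∑ x ∈ s, ∑ y ∈ t, (starRingEnd ℂ) (c x) * d y * φ (x⁻¹ * y) := by
  rw [Bf]
  rw [Finset.sum_subset hs]
  · refine Finset.sum_congr rfl fun x _ => ?_
    refine Finset.sum_subset ht fun y _ hy => ?_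
    rw [Finsupp.notMem_support_iff.mp hy]
    ring
  · intro x _ hx
    rw [Finsupp.notMem_support_iff.mp hx]
    simp

lemma Bf_add_left (φ : G → ℂ) (c c' d : G →₀ ℂ) :
    Bf φ (c + c') d = Bf φ c d + Bf φ c' d := by
  classical
  rw [Bf_eq_sum φ (c + c') d (Finsupp.support_add) (subset_refl _),
    Bf_eq_sum φ c d (Finset.subset_union_left) (subset_refl _),
    Bf_eq_sum φ c' d (Finset.subset_union_right) (subset_refl _), ← Finset.sum_add_distrib]
  refine Finset.sum_congr rfl fun x _ => ?_
  rw [← Finset.sum_add_distrib]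
  refine Finset.sum_congr rfl fun y _ => ?_
  simp only [Finsupp.add_apply, map_add]
  ring

lemma Bf_smul_left (φ : G → ℂ) (a : ℂ) (c d : G →₀ ℂ) :
    Bf φ (a • c) d = (starRingEnd ℂ) a * Bf φ c d := by
  classical
  rw [Bf_eq_sum φ (a • c) d (Finsupp.support_smul) (subset_refl _), Bf, Finset.mul_sum]
  refine Finset.sum_congr rfl fun x _ => ?_
  rw [Finset.mul_sum]
  refine Finset.sum_congr rfl fun y _ => ?_
  simp only [Finsupp.smul_apply, smul_eq_mul, map_mul]
  ring

lemma Bf_add_right (φ : G → ℂ) (c d d' : G →₀ ℂ) :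
    Bf φ c (d + d') = Bf φ c d + Bf φ c d' := by
  classical
  rw [Bf_eq_sum φ c (d + d') (subset_refl _) (Finsupp.support_add),
    Bf_eq_sum φ c d (subset_refl _) (Finset.subset_union_left),
    Bf_eq_sum φ c d' (subset_refl _) (Finset.subset_union_right), ← Finset.sum_add_distrib]
  refine Finset.sum_congr rfl fun x _ => ?_
  rw [← Finset.sum_add_distrib]
  refine Finset.sum_congr rfl fun y _ => ?_
  simp only [Finsupp.add_apply]
  ring

lemma Bf_smul_right (φ : G → ℂ) (a : ℂ) (c d : G →₀ ℂ) :
    Bf φ c (a • d) = a * Bf φ c d := by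
  classical
  rw [Bf_eq_sum φ c (a • d) (subset_refl _) (Finsupp.support_smul), Bf, Finset.mul_sum]
  refine Finset.sum_congr rfl fun x _ => ?_
  rw [Finset.mul_sum]
  refine Finset.sum_congr rfl fun y _ => ?_
  simp only [Finsupp.smul_apply, smul_eq_mul]
  ring

lemma Bf_sub_left (φ : G → ℂ) (c c' d : G →₀ ℂ) :
    Bf φ (c - c') d = Bf φ c d - Bf φ c' d := by
  have := Bf_add_left φ (c - c') c' d
  rw [sub_add_cancel] at this
  linear_combination -this

lemma Bf_sub_right (φ : G → ℂ) (c d d' : G →₀ ℂ) :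
    Bf φ c (d - d') = Bf φ c d - Bf φ c d' := by
  have := Bf_add_right φ c (d - d') d'
  rw [sub_add_cancel] at this
  linear_combination -this



lemma nonneg_is_real {z : ℂ} (h : 0 ≤ z) : z = (z.re : ℂ) := by
  rw [Complex.le_def] at h
  exact Complex.ext rfl h.2.symm

lemma nonneg_re {z : ℂ} (h : 0 ≤ z) : 0 ≤ z.re := by
  rw [Complex.le_def] at h; simpa using h.1

/-- translation -/
def Tr (g : G) (c : G →₀ ℂ) : G →₀ ℂ := Finsupp.equivMapDomain (Equiv.mulLeft g) c

lemma Tr_apply (g : G) (c : G →₀ ℂ) (x : G) : Tr g c x = c (g⁻¹ * x) := by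
  simp [Tr, Finsupp.equivMapDomain_apply]

lemma Tr_Tr (a b : G) (c : G →₀ ℂ) : Tr a (Tr b c) = Tr (a * b) c := by
  ext x; simp [Tr_apply, mul_assoc]

lemma Tr_sub (g : G) (c d : G →₀ ℂ) : Tr g (c - d) = Tr g c - Tr g d := by
  ext x; simp [Tr_apply]

lemma Tr_support (g : G) (c : G →₀ ℂ) :
    (Tr g c).support = c.support.map (mulLeftEmbedding g) := by
  ext x
  simp only [Finsupp.mem_support_iff, Tr_apply, Finset.mem_map, mulLeftEmbedding_apply]
  constructor
  · intro h; exact ⟨g⁻¹ * x, h, by group⟩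
  · rintro ⟨y, hy, rfl⟩; simpa using hy

lemma Bf_Tr_Tr (φ : G → ℂ) (a : G) (c d : G →₀ ℂ) :
    Bf φ (Tr a c) (Tr a d) = Bf φ c d := by
  rw [Bf, Tr_support, Tr_support, Finset.sum_map]
  rw [Bf]
  refine Finset.sum_congr rfl fun x _ => ?_
  rw [Finset.sum_map]
  refine Finset.sum_congr rfl fun y _ => ?_
  simp only [mulLeftEmbedding_apply, Tr_apply]
  rw [inv_mul_cancel_left, inv_mul_cancel_left]
  congr 2
  group

lemma IsPDFun.one_nonneg {φ : G → ℂ} (hφ : IsPDFun φ) : 0 ≤ φ 1 := by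
  have := hφ 1 (fun _ => 1) (fun _ => 1)
  simpa using this

lemma IsPDFun.herm {φ : G → ℂ} (hφ : IsPDFun φ) (g : G) : φ g⁻¹ = (starRingEnd ℂ) (φ g) := by
  have h1 : (φ 1).im = 0 := by
    rw [nonneg_is_real hφ.one_nonneg]; simp
  have S1 := hφ 2 ![1, g] ![1, 1]
  have S2 := hφ 2 ![1, g] ![1, Complex.I]
  rw [Complex.le_def] at S1 S2
  have e1 := S1.2
  have e2 := S2.2
  simp only [Fin.sum_univ_two, Matrix.cons_val_zero, Matrix.cons_val_one, Matrix.head_cons,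
    map_one, one_mul, mul_one, inv_one, Complex.zero_im, inv_mul_cancel, Complex.conj_I] at e1 e2
  simp only [Complex.add_im, Complex.mul_im, Complex.I_re, Complex.I_im, Complex.neg_re,
    Complex.neg_im, h1, Complex.mul_re, neg_mul, one_mul, zero_mul, mul_zero, mul_one] at e1 e2
  apply Complex.ext <;> simp only [Complex.conj_re, Complex.conj_im] <;> linarith


lemma Bf_self_nonneg {φ : G → ℂ} (hφ : IsPDFun φ) (c : G →₀ ℂ) : 0 ≤ Bf φ c c := by
  classical
  set s := c.support with hs
  set N := s.card with hN
  let e : Fin N ≃ {x // x ∈ s} := s.equivFin.symm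
  have key := hφ N (fun i => (e i : G)) (fun i => c (e i : G))
  have h1 : ∀ (F : G → ℂ), ∑ x ∈ s, F x = ∑ i : Fin N, F (e i : G) := by
    intro F
    rw [← Finset.sum_coe_sort s F]
    exact (Equiv.sum_comp e (fun a => F (a : G))).symm
  have : Bf φ c c = ∑ i, ∑ j, (starRingEnd ℂ) (c (e i : G)) * c (e j : G) *
      φ ((e i : G)⁻¹ * (e j : G)) := by
    rw [Bf, h1 (fun x => ∑ y ∈ s, (starRingEnd ℂ) (c x) * c y * φ (x⁻¹ * y))]
    exact Finset.sum_congr rfl fun i _ =>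
      h1 (fun y => (starRingEnd ℂ) (c (e i : G)) * c y * φ ((e i : G)⁻¹ * y))
  rw [this]
  exact key

lemma Bf_conj {φ : G → ℂ} (hφ : IsPDFun φ) (c d : G →₀ ℂ) :
    (starRingEnd ℂ) (Bf φ c d) = Bf φ d c := by
  rw [Bf, Bf, map_sum, Finset.sum_comm]
  refine Finset.sum_congr rfl fun y _ => ?_
  rw [map_sum]
  refine Finset.sum_congr rfl fun x _ => ?_
  rw [map_mul, map_mul, Complex.conj_conj]
  have : φ (y⁻¹ * x) = (starRingEnd ℂ) (φ (x⁻¹ * y)) := by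
    have := hφ.herm (x⁻¹ * y)
    rw [mul_inv_rev, inv_inv] at this
    exact this
  rw [this, Complex.conj_conj]
  ring

/-- Cauchy-Schwarz for the possibly degenerate form. -/
lemma Bf_cauchy_schwarz {φ : G → ℂ} (hφ : IsPDFun φ) (c d : G →₀ ℂ) :
    Complex.normSq (Bf φ c d) ≤ (Bf φ c c).re * (Bf φ d d).re := by
  set A := (Bf φ c c).re with hA
  set B := (Bf φ d d).re with hB
  set X := Bf φ c d with hX
  have hA0 : 0 ≤ A := nonneg_re (Bf_self_nonneg hφ c)
  have hB0 : 0 ≤ B := nonneg_re (Bf_self_nonneg hφ d)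
  have hAc : Bf φ c c = (A : ℂ) := nonneg_is_real (Bf_self_nonneg hφ c)
  have hBc : Bf φ d d = (B : ℂ) := nonneg_is_real (Bf_self_nonneg hφ d)
  have key : ∀ r : ℝ, 0 ≤ A - 2 * r * Complex.normSq X + r ^ 2 * Complex.normSq X * B := by
    intro r
    have h := Bf_self_nonneg hφ (c - ((r : ℂ) * (starRingEnd ℂ) X) • d)
    set t : ℂ := (r : ℂ) * (starRingEnd ℂ) X with ht
    have expand : Bf φ (c - t • d) (c - t • d)
        = (A : ℂ) - ((r : ℝ) * Complex.normSq X : ℝ)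
          - ((r : ℝ) * Complex.normSq X : ℝ)
          + ((r ^ 2 * Complex.normSq X * B : ℝ) : ℂ) := by
      rw [Bf_sub_left, Bf_sub_right, Bf_sub_right, Bf_smul_left, Bf_smul_left,
        Bf_smul_right, Bf_smul_right]
      rw [← Bf_conj hφ c d, ← hX, hAc, hBc]
      have hXX : (starRingEnd ℂ) X * X = (Complex.normSq X : ℂ) :=
        (Complex.normSq_eq_conj_mul_self).symm
      rw [ht]
      simp only [map_mul, Complex.conj_conj, Complex.conj_ofReal]
      push_cast
      linear_combination ((r:ℂ)^2 * (B:ℂ) - 2*(r:ℂ)) * hXX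
    rw [expand] at h
    have := nonneg_re h
    simp only [Complex.sub_re, Complex.add_re, Complex.ofReal_re] at this
    linarith
  rcases eq_or_lt_of_le hB0 with hB1 | hB1
  · -- B = 0 : show X = 0
    have h2 : ∀ r : ℝ, 0 ≤ A - 2 * r * Complex.normSq X := by
      intro r
      have := key r
      rw [← hB1] at this
      linarith
    have hX0 : Complex.normSq X = 0 := by
      by_contra hne
      have hpos : 0 < Complex.normSq X := lt_of_le_of_ne (Complex.normSq_nonneg X) (Ne.symm hne)
      have h3 := h2 ((A + 1) / (2 * Complex.normSq X))
      have h4 : 2 * ((A + 1) / (2 * Complex.normSq X)) * Complex.normSq X = A + 1 := by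
        field_simp
      rw [h4] at h3
      linarith
    rw [hX0, ← hB1, mul_zero]
  · have := key (1 / B)
    have h4 : 0 ≤ A - Complex.normSq X / B := by
      have e : A - 2 * (1 / B) * Complex.normSq X + (1 / B) ^ 2 * Complex.normSq X * B
          = A - Complex.normSq X / B := by
        field_simp
        ring
      linarith [key (1 / B), e ▸ key (1 / B)]
    have := mul_le_mul_of_nonneg_right h4 (le_of_lt hB1)
    rw [sub_mul, div_mul_cancel₀] at this
    · linarith
    · exact ne_of_gt hB1

lemma Tr_one (c : G →₀ ℂ) : Tr 1 c = c := by
  ext x; simp [Tr_apply]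

lemma Bf_zero_left (φ : G → ℂ) (d : G →₀ ℂ) : Bf φ 0 d = 0 := by
  simp [Bf]

lemma Bf_sum_left (φ : G → ℂ) {ι : Type*} (s : Finset ι) (v : ι → (G →₀ ℂ)) (d : G →₀ ℂ) :
    Bf φ (∑ i ∈ s, v i) d = ∑ i ∈ s, Bf φ (v i) d := by
  classical
  induction s using Finset.induction_on with
  | empty => simp [Bf_zero_left]
  | insert _ _ hx ih =>
      rw [Finset.sum_insert hx, Finset.sum_insert hx, Bf_add_left, ih]

lemma Bf_zero_right (φ : G → ℂ) (c : G →₀ ℂ) : Bf φ c 0 = 0 := by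
  simp [Bf]

lemma Bf_sum_right (φ : G → ℂ) {ι : Type*} (s : Finset ι) (c : G →₀ ℂ) (v : ι → (G →₀ ℂ)) :
    Bf φ c (∑ i ∈ s, v i) = ∑ i ∈ s, Bf φ c (v i) := by
  classical
  induction s using Finset.induction_on with
  | empty => simp [Bf_zero_right]
  | insert _ _ hx ih =>
      rw [Finset.sum_insert hx, Finset.sum_insert hx, Bf_add_right, ih]

lemma Bf_Tr_right (φ : G → ℂ) (h : G) (c d : G →₀ ℂ) :
    Bf φ c (Tr h d) = Bf φ (Tr h⁻¹ c) d := by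
  rw [← Bf_Tr_Tr φ h⁻¹ c (Tr h d), Tr_Tr, inv_mul_cancel, Tr_one]

/-- The translated quadratic form `g ↦ ⟨μ, π(g) μ⟩`. -/
def QQ (φ : G → ℂ) (μ : G →₀ ℂ) (g : G) : ℂ := Bf φ μ (Tr g μ)

lemma QQ_eq_sum (φ : G → ℂ) (μ : G →₀ ℂ) (g : G) :
    QQ φ μ g = ∑ x ∈ μ.support, ∑ y ∈ μ.support,
      (starRingEnd ℂ) (μ x) * μ y * φ (x⁻¹ * g * y) := by
  rw [QQ, Bf, Tr_support]
  refine Finset.sum_congr rfl fun x _ => ?_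
  rw [Finset.sum_map]
  refine Finset.sum_congr rfl fun y _ => ?_
  simp only [mulLeftEmbedding_apply, Tr_apply, inv_mul_cancel_left]
  rw [← mul_assoc x⁻¹ g y]

lemma QQ_continuous [TopologicalSpace G] [IsTopologicalGroup G] {φ : G → ℂ}
    (hφc : Continuous φ) (μ : G →₀ ℂ) : Continuous (QQ φ μ) := by
  have : QQ φ μ = fun g => ∑ x ∈ μ.support, ∑ y ∈ μ.support,
      (starRingEnd ℂ) (μ x) * μ y * φ (x⁻¹ * g * y) := funext fun g => QQ_eq_sum φ μ g
  rw [this]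
  refine continuous_finset_sum _ fun x _ => continuous_finset_sum _ fun y _ => ?_
  exact continuous_const.mul (hφc.comp (by continuity))

lemma QQ_pd {φ : G → ℂ} (hφ : IsPDFun φ) (μ : G →₀ ℂ) : IsPDFun (QQ φ μ) := by
  intro N g κ
  have key : ∀ i j, (starRingEnd ℂ) (κ i) * κ j * QQ φ μ ((g i)⁻¹ * g j)
      = Bf φ (κ i • Tr (g i) μ) (κ j • Tr (g j) μ) := by
    intro i j
    rw [Bf_smul_left, Bf_smul_right]
    have : Bf φ (Tr (g i) μ) (Tr (g j) μ) = QQ φ μ ((g i)⁻¹ * g j) := by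
      rw [QQ, ← Bf_Tr_Tr φ (g i)⁻¹ (Tr (g i) μ) (Tr (g j) μ), Tr_Tr, Tr_Tr,
        inv_mul_cancel, Tr_one]
    rw [this]
    ring
  calc (0:ℂ) ≤ Bf φ (∑ i, κ i • Tr (g i) μ) (∑ j, κ j • Tr (g j) μ) :=
        Bf_self_nonneg hφ _
    _ = ∑ i, ∑ j, (starRingEnd ℂ) (κ i) * κ j * QQ φ μ ((g i)⁻¹ * g j) := by
        rw [Bf_sum_left]
        refine Finset.sum_congr rfl fun i _ => ?_
        rw [Bf_sum_right]
        exact Finset.sum_congr rfl fun j _ => (key i j).symm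

lemma QQ_conj_shift (φ : G → ℂ) (μ : G →₀ ℂ) (h g h' : G) :
    QQ φ μ (h * g * h') = Bf φ (Tr h⁻¹ μ) (Tr g (Tr h' μ)) := by
  rw [QQ, ← Bf_Tr_right, Tr_Tr, Tr_Tr, mul_assoc]

lemma abs_Bf_Tr_le {φ : G → ℂ} (hφ : IsPDFun φ) (c d : G →₀ ℂ) (g : G) :
    ‖Bf φ c (Tr g d)‖
      ≤ Real.sqrt (Bf φ c c).re * Real.sqrt (Bf φ d d).re := by
  have h2 : (Bf φ (Tr g d) (Tr g d)).re = (Bf φ d d).re := by rw [Bf_Tr_Tr]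
  have h1 := Bf_cauchy_schwarz hφ c (Tr g d)
  rw [h2] at h1
  rw [Complex.norm_def]
  calc Real.sqrt (Complex.normSq (Bf φ c (Tr g d)))
      ≤ Real.sqrt ((Bf φ c c).re * (Bf φ d d).re) := Real.sqrt_le_sqrt h1
    _ = Real.sqrt (Bf φ c c).re * Real.sqrt (Bf φ d d).re :=
        Real.sqrt_mul (nonneg_re (Bf_self_nonneg hφ c)) _

lemma conj_half : (starRingEnd ℂ) (2⁻¹:ℂ) = 2⁻¹ := by
  rw [map_inv₀, map_ofNat]

lemma Bf_par_re (φ : G → ℂ) (μ ν : G →₀ ℂ) :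
    (Bf φ (μ - ν) (μ - ν)).re = 2*(Bf φ μ μ).re + 2*(Bf φ ν ν).re
      - 4*(Bf φ ((2⁻¹:ℂ)•(μ+ν)) ((2⁻¹:ℂ)•(μ+ν))).re := by
  have expand : Bf φ (μ - ν) (μ - ν) = 2 * Bf φ μ μ + 2 * Bf φ ν ν
      - 4 * Bf φ ((2⁻¹:ℂ)•(μ+ν)) ((2⁻¹:ℂ)•(μ+ν)) := by
    rw [Bf_smul_left, Bf_smul_right, conj_half, Bf_sub_left, Bf_sub_right, Bf_sub_right,
      Bf_add_left, Bf_add_right, Bf_add_right]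
    ring
  rw [expand]
  simp only [Complex.sub_re, Complex.add_re, Complex.mul_re, Complex.re_ofNat,
    Complex.im_ofNat, zero_mul, sub_zero]

/-- Finitely supported probability measures supported in `H`. -/
def IsProb (H : Subgroup G) (μ : G →₀ ℂ) : Prop :=
  (∀ x ∈ μ.support, x ∈ H) ∧ (∀ x, 0 ≤ μ x) ∧ ∑ x ∈ μ.support, μ x = 1

lemma sum_superset (μ : G →₀ ℂ) {s : Finset G} (h : μ.support ⊆ s) :
    ∑ x ∈ s, μ x = ∑ x ∈ μ.support, μ x :=
  (Finset.sum_subset h (fun x _ hx => Finsupp.notMem_support_iff.mp hx)).symm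

lemma isProb_single (H : Subgroup G) : IsProb H (Finsupp.single (1:G) (1:ℂ)) := by
  refine ⟨fun x hx => ?_, fun x => ?_, ?_⟩
  · have := Finsupp.support_single_subset hx
    simp only [Finset.mem_singleton] at this
    rw [this]; exact H.one_mem
  · rcases eq_or_ne x 1 with rfl | hne
    · rw [Finsupp.single_eq_same]; rw [Complex.le_def]; norm_num
    · rw [Finsupp.single_eq_of_ne hne]
  · rw [Finsupp.support_single_ne_zero _ one_ne_zero]
    simp

lemma IsProb.half_add {H : Subgroup G} {μ ν : G →₀ ℂ} (hμ : IsProb H μ) (hν : IsProb H ν) :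
    IsProb H ((2⁻¹:ℂ) • (μ + ν)) := by
  classical
  have hsupp : ((2⁻¹:ℂ) • (μ + ν)).support ⊆ μ.support ∪ ν.support :=
    (Finsupp.support_smul).trans Finsupp.support_add
  refine ⟨fun x hx => ?_, fun x => ?_, ?_⟩
  · rcases Finset.mem_union.mp (hsupp hx) with h | h
    · exact hμ.1 x h
    · exact hν.1 x h
  · have : ((2⁻¹:ℂ) • (μ + ν)) x = 2⁻¹ * (μ x + ν x) := by
      simp [Finsupp.smul_apply, mul_add]
    rw [this]
    refine mul_nonneg ?_ (add_nonneg (hμ.2.1 x) (hν.2.1 x))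
    rw [Complex.le_def]; norm_num
  · have h1 : ∑ x ∈ μ.support ∪ ν.support, ((2⁻¹:ℂ) • (μ + ν)) x
        = 2⁻¹ * ((∑ x ∈ μ.support ∪ ν.support, μ x) + ∑ x ∈ μ.support ∪ ν.support, ν x) := by
      rw [mul_add, Finset.mul_sum, Finset.mul_sum, ← Finset.sum_add_distrib]
      exact Finset.sum_congr rfl fun x _ => by simp [Finsupp.smul_apply, mul_add]
    rw [← sum_superset ((2⁻¹:ℂ) • (μ + ν)) hsupp, h1,
      sum_superset μ Finset.subset_union_left, sum_superset ν Finset.subset_union_right,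
      hμ.2.2, hν.2.2]
    norm_num

lemma IsProb.tr {H : Subgroup G} {μ : G →₀ ℂ} (hμ : IsProb H μ) {h : G} (hh : h ∈ H) :
    IsProb H (Tr h μ) := by
  refine ⟨fun x hx => ?_, fun x => ?_, ?_⟩
  · rw [Tr_support] at hx
    rcases Finset.mem_map.mp hx with ⟨y, hy, rfl⟩
    exact H.mul_mem hh (hμ.1 y hy)
  · rw [Tr_apply]; exact hμ.2.1 _
  · rw [Tr_support, Finset.sum_map]
    rw [← hμ.2.2]
    refine Finset.sum_congr rfl fun y _ => ?_
    rw [mulLeftEmbedding_apply, Tr_apply, inv_mul_cancel_left]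

lemma nonneg_im {z : ℂ} (h : 0 ≤ z) : z.im = 0 := ((Complex.le_def.mp h).2).symm

lemma lim_nonneg {u : ℕ → ℂ} {L : ℂ} (h : Filter.Tendsto u Filter.atTop (nhds L))
    (hu : ∀ n, 0 ≤ u n) : 0 ≤ L := by
  have hre : Filter.Tendsto (fun n => (u n).re) Filter.atTop (nhds L.re) :=
    (Complex.continuous_re.tendsto L).comp h
  have him : Filter.Tendsto (fun n => (u n).im) Filter.atTop (nhds L.im) :=
    (Complex.continuous_im.tendsto L).comp h
  have h1 : 0 ≤ L.re :=
    ge_of_tendsto hre (Filter.Eventually.of_forall fun n => nonneg_re (hu n))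
  have h2 : L.im = 0 := by
    refine tendsto_nhds_unique him ?_
    have : (fun n => (u n).im) = fun _ => (0:ℝ) := funext fun n => nonneg_im (hu n)
    rw [this]
    exact tendsto_const_nhds
  rw [Complex.le_def]
  exact ⟨by simpa using h1, by simp [h2]⟩

lemma QQ_f_diff {H : Subgroup G} {f fp fm : G → ℂ}
    (hdiff : ∀ g, f g = fp g - fm g) (hfinv : IsDosetInvariant H f)
    {μ : G →₀ ℂ} (hμ : IsProb H μ) (g : G) :
    QQ fp μ g - QQ fm μ g = f g := by
  rw [QQ_eq_sum, QQ_eq_sum, ← Finset.sum_sub_distrib]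
  have step1 : ∀ x ∈ μ.support,
      ((∑ y ∈ μ.support, (starRingEnd ℂ) (μ x) * μ y * fp (x⁻¹ * g * y))
        - ∑ y ∈ μ.support, (starRingEnd ℂ) (μ x) * μ y * fm (x⁻¹ * g * y))
      = ∑ y ∈ μ.support, ((starRingEnd ℂ) (μ x) * μ y) * f g := by
    intro x hx
    rw [← Finset.sum_sub_distrib]
    refine Finset.sum_congr rfl fun y hy => ?_
    have hval : fp (x⁻¹ * g * y) - fm (x⁻¹ * g * y) = f g := by
      rw [← hdiff]
      exact hfinv g x⁻¹ (H.inv_mem (hμ.1 x hx)) y (hμ.1 y hy)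
    linear_combination ((starRingEnd ℂ) (μ x) * μ y) * hval
  rw [Finset.sum_congr rfl step1]
  have step2 : ∑ x ∈ μ.support, ∑ y ∈ μ.support, ((starRingEnd ℂ) (μ x) * μ y) * f g
      = ((∑ x ∈ μ.support, (starRingEnd ℂ) (μ x)) * (∑ y ∈ μ.support, μ y)) * f g := by
    rw [Finset.sum_mul_sum, Finset.sum_mul]
    refine Finset.sum_congr rfl fun x _ => ?_
    rw [Finset.sum_mul]
  rw [step2, ← map_sum, hμ.2.2, map_one, one_mul, one_mul]

open Filter Topology in
lemma construct_limit {G : Type} [Group G] [TopologicalSpace G] [IsTopologicalGroup G]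
    (H : Subgroup G) (φ : G → ℂ) (hφ : IsPDFun φ) (hφc : Continuous φ)
    (NN : (G →₀ ℂ) → ℝ) (D : ℝ)
    (μ : ℕ → (G →₀ ℂ)) (hμP : ∀ n, IsProb H (μ n))
    (hφle : ∀ σ, (Bf φ σ σ).re ≤ NN σ)
    (hNNtr : ∀ (h : G) (σ : G →₀ ℂ), NN (Tr h σ) = NN σ)
    (hbound : ∀ n, NN (μ n) ≤ D + 1)
    (hdiffNN : ∀ m n : ℕ, NN (μ m - μ n) ≤ 2/(m+1) + 2/(n+1))
    (htrNN : ∀ (n : ℕ) (h : G), h ∈ H → NN (Tr h (μ n) - μ n) ≤ 4/(n+1)) :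
    ∃ F : G → ℂ, Continuous F ∧ IsPDFun F ∧ IsDosetInvariant H F ∧
      ∀ g : G, Tendsto (fun n => QQ φ (μ n) g) atTop (𝓝 (F g)) := by
  -- basic Cauchy-Schwarz bound
  have babs : ∀ (c d : G →₀ ℂ) (g : G),
      ‖Bf φ c (Tr g d)‖ ≤ Real.sqrt (NN c) * Real.sqrt (NN d) := by
    intro c d g
    refine (abs_Bf_Tr_le hφ c d g).trans ?_
    exact mul_le_mul (Real.sqrt_le_sqrt (hφle c)) (Real.sqrt_le_sqrt (hφle d))
      (Real.sqrt_nonneg _) (Real.sqrt_nonneg _)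
  -- the vanishing bound sequence
  have hb0 : Tendsto (fun n : ℕ => Real.sqrt (4/((n:ℝ)+1)) * (2*Real.sqrt (D+1)))
      atTop (𝓝 0) := by
    have h1 : Tendsto (fun n : ℕ => 4/((n:ℝ)+1)) atTop (𝓝 0) := by
      have h4 := tendsto_one_div_add_atTop_nhds_zero_nat.const_mul (4:ℝ)
      simpa [mul_one_div, div_eq_mul_inv] using h4
    have h2 : Tendsto (fun n : ℕ => Real.sqrt (4/((n:ℝ)+1))) atTop (𝓝 0) := by
      have h3 := (Real.continuous_sqrt.tendsto 0).comp h1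
      simp only [Function.comp_def, Real.sqrt_zero] at h3
      exact h3
    simpa [zero_mul] using h2.mul_const (2*Real.sqrt (D+1))
  -- pairwise difference estimate
  have Ediff : ∀ m n : ℕ, ∀ x : G, ‖QQ φ (μ m) x - QQ φ (μ n) x‖
      ≤ Real.sqrt (NN (μ m - μ n)) * (Real.sqrt (NN (μ m)) + Real.sqrt (NN (μ n))) := by
    intro m n x
    have hsplit : QQ φ (μ m) x - QQ φ (μ n) x
        = Bf φ (μ m - μ n) (Tr x (μ m)) + Bf φ (μ n) (Tr x (μ m - μ n)) := by
      rw [QQ, QQ, Bf_sub_left, Tr_sub, Bf_sub_right]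
      ring
    rw [hsplit]
    refine (norm_add_le _ _).trans ?_
    have b1 := babs (μ m - μ n) (μ m) x
    have b2 := babs (μ n) (μ m - μ n) x
    calc ‖Bf φ (μ m - μ n) (Tr x (μ m))‖
          + ‖Bf φ (μ n) (Tr x (μ m - μ n))‖
        ≤ Real.sqrt (NN (μ m - μ n)) * Real.sqrt (NN (μ m))
          + Real.sqrt (NN (μ n)) * Real.sqrt (NN (μ m - μ n)) := add_le_add b1 b2
      _ = Real.sqrt (NN (μ m - μ n)) * (Real.sqrt (NN (μ m)) + Real.sqrt (NN (μ n))) := by ring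
  -- uniform Cauchy
  have hUC : UniformCauchySeqOn (fun n g => QQ φ (μ n) g) atTop Set.univ := by
    rw [Metric.uniformCauchySeqOn_iff]
    intro ε hε
    obtain ⟨N, hN⟩ := (hb0.eventually (gt_mem_nhds hε)).exists
    refine ⟨N, fun m hm n hn x _ => ?_⟩
    have key1 : NN (μ m - μ n) ≤ 4/((N:ℝ)+1) := by
      have c1 : 2/((m:ℝ)+1) ≤ 2/((N:ℝ)+1) := by
        have : ((N:ℝ)+1) ≤ ((m:ℝ)+1) := by
          have : (N:ℝ) ≤ (m:ℝ) := by exact_mod_cast hm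
          linarith
        gcongr
      have c2 : 2/((n:ℝ)+1) ≤ 2/((N:ℝ)+1) := by
        have : ((N:ℝ)+1) ≤ ((n:ℝ)+1) := by
          have : (N:ℝ) ≤ (n:ℝ) := by exact_mod_cast hn
          linarith
        gcongr
      have := hdiffNN m n
      have e4 : 2/((N:ℝ)+1) + 2/((N:ℝ)+1) = 4/((N:ℝ)+1) := by ring
      linarith
    have key2 : Real.sqrt (NN (μ m)) + Real.sqrt (NN (μ n)) ≤ 2*Real.sqrt (D+1) := by
      have s1 : Real.sqrt (NN (μ m)) ≤ Real.sqrt (D+1) := Real.sqrt_le_sqrt (hbound m)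
      have s2 : Real.sqrt (NN (μ n)) ≤ Real.sqrt (D+1) := Real.sqrt_le_sqrt (hbound n)
      linarith
    rw [Complex.dist_eq]
    calc ‖QQ φ (μ m) x - QQ φ (μ n) x‖
        ≤ Real.sqrt (NN (μ m - μ n)) * (Real.sqrt (NN (μ m)) + Real.sqrt (NN (μ n))) :=
          Ediff m n x
      _ ≤ Real.sqrt (4/((N:ℝ)+1)) * (2*Real.sqrt (D+1)) := by
          refine mul_le_mul (Real.sqrt_le_sqrt key1) key2 ?_ (Real.sqrt_nonneg _)
          positivity
      _ < ε := hN
  -- pointwise limits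
  have hpt : ∀ g : G, ∃ L, Tendsto (fun n => QQ φ (μ n) g) atTop (𝓝 L) := by
    intro g
    have hc : CauchySeq (fun n => QQ φ (μ n) g) := by
      rw [Metric.cauchySeq_iff]
      intro ε hε
      obtain ⟨N, hN⟩ := (Metric.uniformCauchySeqOn_iff.mp hUC) ε hε
      exact ⟨N, fun m hm n hn => hN m hm n hn g (Set.mem_univ g)⟩
    exact cauchySeq_tendsto_of_complete hc
  choose F hF using hpt
  have hTU : TendstoUniformly (fun n g => QQ φ (μ n) g) F atTop :=
    tendstoUniformlyOn_univ.mp (hUC.tendstoUniformlyOn_of_tendsto (fun x _ => hF x))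
  refine ⟨F, ?_, ?_, ?_, hF⟩
  · exact hTU.continuous (Filter.Eventually.of_forall fun n => QQ_continuous hφc (μ n)).frequently
  · intro N g κ
    have hlim : Tendsto (fun n => ∑ i, ∑ j, (starRingEnd ℂ) (κ i) * κ j
        * QQ φ (μ n) ((g i)⁻¹ * g j)) atTop
        (𝓝 (∑ i, ∑ j, (starRingEnd ℂ) (κ i) * κ j * F ((g i)⁻¹ * g j))) := by
      refine tendsto_finset_sum _ fun i _ => tendsto_finset_sum _ fun j _ => ?_
      exact (hF _).const_mul _
    exact lim_nonneg hlim (fun n => QQ_pd hφ (μ n) N g κ)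
  · intro g h hh h' hh'
    have hzero : Tendsto (fun n => QQ φ (μ n) (h*g*h') - QQ φ (μ n) g) atTop (𝓝 0) := by
      refine squeeze_zero_norm (fun n => ?_) hb0
      have hsplit : QQ φ (μ n) (h*g*h') - QQ φ (μ n) g
          = Bf φ (Tr h⁻¹ (μ n) - μ n) (Tr g (Tr h' (μ n)))
            + Bf φ (μ n) (Tr g (Tr h' (μ n) - μ n)) := by
        rw [QQ_conj_shift, QQ, Bf_sub_left, Tr_sub, Bf_sub_right]
        ring
      rw [hsplit]
      refine (norm_add_le _ _).trans ?_
      have b1 := babs (Tr h⁻¹ (μ n) - μ n) (Tr h' (μ n)) g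
      have b2 := babs (μ n) (Tr h' (μ n) - μ n) g
      have s1 : Real.sqrt (NN (Tr h⁻¹ (μ n) - μ n)) ≤ Real.sqrt (4/((n:ℝ)+1)) :=
        Real.sqrt_le_sqrt (htrNN n h⁻¹ (H.inv_mem hh))
      have s2 : Real.sqrt (NN (Tr h' (μ n))) ≤ Real.sqrt (D+1) := by
        rw [hNNtr]
        exact Real.sqrt_le_sqrt (hbound n)
      have s3 : Real.sqrt (NN (μ n)) ≤ Real.sqrt (D+1) := Real.sqrt_le_sqrt (hbound n)
      have s4 : Real.sqrt (NN (Tr h' (μ n) - μ n)) ≤ Real.sqrt (4/((n:ℝ)+1)) :=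
        Real.sqrt_le_sqrt (htrNN n h' hh')
      calc ‖Bf φ (Tr h⁻¹ (μ n) - μ n) (Tr g (Tr h' (μ n)))‖
            + ‖Bf φ (μ n) (Tr g (Tr h' (μ n) - μ n))‖
          ≤ Real.sqrt (NN (Tr h⁻¹ (μ n) - μ n)) * Real.sqrt (NN (Tr h' (μ n)))
            + Real.sqrt (NN (μ n)) * Real.sqrt (NN (Tr h' (μ n) - μ n)) := add_le_add b1 b2
        _ ≤ Real.sqrt (4/((n:ℝ)+1)) * Real.sqrt (D+1)
            + Real.sqrt (D+1) * Real.sqrt (4/((n:ℝ)+1)) := by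
            refine add_le_add (mul_le_mul s1 s2 (Real.sqrt_nonneg _) (Real.sqrt_nonneg _))
              (mul_le_mul s3 s4 (Real.sqrt_nonneg _) (Real.sqrt_nonneg _))
        _ = Real.sqrt (4/((n:ℝ)+1)) * (2*Real.sqrt (D+1)) := by ring
    have h1 : Tendsto (fun n => QQ φ (μ n) (h*g*h') - QQ φ (μ n) g) atTop
        (𝓝 (F (h*g*h') - F g)) := (hF _).sub (hF g)
    have := tendsto_nhds_unique h1 hzero
    exact sub_eq_zero.mp this
end PDAux

/-- `B_ℝ(G) ∩ C_ℂ(H\G/H) = B_ℝ(H\G/H)`: a continuous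
double-coset-invariant function on `G` admits a continuous positive decomposition
iff it admits one into double-coset-invariant functions. -/
theorem real_fourier_stieltjes_inter_doset_invariant
    {G : Type} [Group G] [TopologicalSpace G] [IsTopologicalGroup G]
    [LocallyCompactSpace G] [T2Space G]
    (H : Subgroup G) (hH : IsClosed (H : Set G))
    (f : G → ℂ) (hfc : Continuous f) (hfinv : IsDosetInvariant H f) :
    (∃ fp fm : G → ℂ,
      Continuous fp ∧ IsPDFun fp ∧ Continuous fm ∧ IsPDFun fm ∧
      ∀ g, f g = fp g - fm g) ↔
    (∃ fp fm : G → ℂ,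
      Continuous fp ∧ IsPDFun fp ∧ IsDosetInvariant H fp ∧
      Continuous fm ∧ IsPDFun fm ∧ IsDosetInvariant H fm ∧
      ∀ g, f g = fp g - fm g) := by
  constructor
  · rintro ⟨fp, fm, hfpc, hfppd, hfmc, hfmpd, hdiff⟩
    classical
    set NNf : (G →₀ ℂ) → ℝ := fun σ => (Bf fp σ σ).re + (Bf fm σ σ).re with hNNf
    have hNN0 : ∀ σ : G →₀ ℂ, 0 ≤ NNf σ := fun σ => by
      simp only [hNNf]
      exact add_nonneg (nonneg_re (Bf_self_nonneg hfppd σ)) (nonneg_re (Bf_self_nonneg hfmpd σ))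
    have hNNtrf : ∀ (h : G) (σ : G →₀ ℂ), NNf (Tr h σ) = NNf σ := fun h σ => by
      simp only [hNNf]
      rw [Bf_Tr_Tr, Bf_Tr_Tr]
    have hNNpar : ∀ σ τ : G →₀ ℂ,
        NNf (σ - τ) = 2*NNf σ + 2*NNf τ - 4*NNf ((2⁻¹:ℂ)•(σ+τ)) := fun σ τ => by
      simp only [hNNf]
      rw [Bf_par_re fp, Bf_par_re fm]
      ring
    have hφle_p : ∀ σ : G →₀ ℂ, (Bf fp σ σ).re ≤ NNf σ := fun σ => by
      simp only [hNNf]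
      exact le_add_of_nonneg_right (nonneg_re (Bf_self_nonneg hfmpd σ))
    have hφle_m : ∀ σ : G →₀ ℂ, (Bf fm σ σ).re ≤ NNf σ := fun σ => by
      simp only [hNNf]
      exact le_add_of_nonneg_left (nonneg_re (Bf_self_nonneg hfppd σ))
    set S : Set ℝ := NNf '' {σ | IsProb H σ} with hSdef
    have hSne : S.Nonempty := ⟨NNf (Finsupp.single 1 1), ⟨_, isProb_single H, rfl⟩⟩
    have hSbd : BddBelow S := ⟨0, by rintro r ⟨σ, _, rfl⟩; exact hNN0 σ⟩
    set D : ℝ := sInf S with hDdef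
    have hDle : ∀ σ : G →₀ ℂ, IsProb H σ → D ≤ NNf σ := fun σ hσ =>
      csInf_le hSbd ⟨σ, hσ, rfl⟩
    have hseq : ∀ n : ℕ, ∃ σ, IsProb H σ ∧ NNf σ < D + 1/(n+1) := by
      intro n
      have hlt : D < D + 1/((n:ℝ)+1) := by
        have : (0:ℝ) < 1/((n:ℝ)+1) := by positivity
        linarith
      obtain ⟨r, ⟨σ, hσ, rfl⟩, hr⟩ := exists_lt_of_csInf_lt hSne hlt
      exact ⟨σ, hσ, hr⟩
    choose μ hμP hμN using hseq
    have hbound : ∀ n, NNf (μ n) ≤ D + 1 := by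
      intro n
      have h1 := hμN n
      have h2 : 1/((n:ℝ)+1) ≤ 1 := by
        rw [div_le_one (by positivity)]
        have : (0:ℝ) ≤ (n:ℝ) := Nat.cast_nonneg n
        linarith
      calc NNf (μ n) ≤ D + 1/((n:ℝ)+1) := le_of_lt (hμN n)
        _ ≤ D + 1 := by linarith
    have hdiffNN : ∀ m n : ℕ, NNf (μ m - μ n) ≤ 2/((m:ℝ)+1) + 2/((n:ℝ)+1) := by
      intro m n
      have h1 := hDle _ ((hμP m).half_add (hμP n))
      have h2 := hμN m
      have h3 := hμN n
      have e1 : 2/((m:ℝ)+1) = 2*(1/((m:ℝ)+1)) := by ring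
      have e2 : 2/((n:ℝ)+1) = 2*(1/((n:ℝ)+1)) := by ring
      rw [hNNpar]
      linarith
    have htrNN : ∀ (n : ℕ) (h : G), h ∈ H → NNf (Tr h (μ n) - μ n) ≤ 4/((n:ℝ)+1) := by
      intro n h hh
      have h1 := hDle _ (((hμP n).tr hh).half_add (hμP n))
      have h2 := hμN n
      have e1 : 4/((n:ℝ)+1) = 4*(1/((n:ℝ)+1)) := by ring
      rw [hNNpar, hNNtrf]
      linarith
    obtain ⟨fP, hPc, hPpd, hPinv, hPlim⟩ :=
      construct_limit H fp hfppd hfpc NNf D μ hμP hφle_p hNNtrf hbound hdiffNN htrNN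
    obtain ⟨fM, hMc, hMpd, hMinv, hMlim⟩ :=
      construct_limit H fm hfmpd hfmc NNf D μ hμP hφle_m hNNtrf hbound hdiffNN htrNN
    refine ⟨fP, fM, hPc, hPpd, hPinv, hMc, hMpd, hMinv, fun g => ?_⟩
    have h1 : Filter.Tendsto (fun n => QQ fp (μ n) g - QQ fm (μ n) g) Filter.atTop
        (nhds (fP g - fM g)) := (hPlim g).sub (hMlim g)
    have h2 : (fun n : ℕ => QQ fp (μ n) g - QQ fm (μ n) g) = fun _ => f g :=
      funext fun n => QQ_f_diff hdiff hfinv (hμP n) g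
    rw [h2] at h1
    exact tendsto_nhds_unique tendsto_const_nhds h1
  · rintro ⟨fp, fm, h1, h2, h3, h4, h5, h6, h7⟩
    exact ⟨fp, fm, h1, h2, h4, h5, h7⟩
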